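/- Path characterization of subtyping in 𝕋_C: for all σ, τ ∈ 𝕋_C, σ ≤ τ if and only if for each path π ∈ ℙ(τ) there exists a path π′ ∈ ℙ(σ) with π′ ≤ π such that, moreover: if π is a type variable α (respectively a constant a), then π′ is the same variable α (respectively the same constant a); if π ≡ σ₂→τ₂, then π′ ≡ σ₁→τ₁ with σ₂ ≤ σ₁ and τ₁ ≤ τ₂; if π ≡ c(τ₁), then π′ ≡ c(σ₁) with σ₁ ≤ τ₁. -/

import Mathlib

/-- Intersection types with constructors `𝕋_C`: constants, type variables, `ω`,
arrows, intersections and unary constructors (constructor names in `ℕ`). -/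
inductive TyC where
  | const : Nat → TyC
  | tvar : Nat → TyC
  | omega : TyC
  | arrow : TyC → TyC → TyC
  | inter : TyC → TyC → TyC
  | ctor : Nat → TyC → TyC
deriving DecidableEq

/-- Subtyping on `𝕋_C`: the least preorder with the BCD axioms together with
covariance of constructors and distribution of constructors over intersection. -/
inductive SubC : TyC → TyC → Prop where
  | refl (σ : TyC) : SubC σ σ
  | trans {σ τ υ : TyC} : SubC σ τ → SubC τ υ → SubC σ υ
  | le_omega (σ : TyC) : SubC σ .omega
  | omega_arrow : SubC .omega (.arrow .omega .omega)
  | inter_left (σ τ : TyC) : SubC (.inter σ τ) σ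
  | inter_right (σ τ : TyC) : SubC (.inter σ τ) τ
  | le_inter {σ τ₁ τ₂ : TyC} : SubC σ τ₁ → SubC σ τ₂ → SubC σ (.inter τ₁ τ₂)
  | arrow_inter (σ τ₁ τ₂ : TyC) :
      SubC (.inter (.arrow σ τ₁) (.arrow σ τ₂)) (.arrow σ (.inter τ₁ τ₂))
  | arrow_mono {σ₁ σ₂ τ₁ τ₂ : TyC} : SubC σ₂ σ₁ → SubC τ₁ τ₂ →
      SubC (.arrow σ₁ τ₁) (.arrow σ₂ τ₂)
  | ctor_mono {τ₁ τ₂ : TyC} (c : Nat) : SubC τ₁ τ₂ → SubC (.ctor c τ₁) (.ctor c τ₂)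
  | ctor_inter (c : Nat) (τ₁ τ₂ : TyC) :
      SubC (.inter (.ctor c τ₁) (.ctor c τ₂)) (.ctor c (.inter τ₁ τ₂))

/-- Type equality on `𝕋_C`: mutual subtyping. -/
def TyCEq (σ τ : TyC) : Prop := SubC σ τ ∧ SubC τ σ

/-- Finite intersection of a list of `𝕋_C` types (`ω` for the empty list). -/
def interListC : List TyC → TyC
  | [] => .omega
  | [π] => π
  | π :: π' :: rest => .inter π (interListC (π' :: rest))
/-- Paths in `𝕋_C`: `π ::= a | α | σ→π | c(ω) | c(π)`. -/
inductive IsPath : TyC → Prop where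
  | const (a : Nat) : IsPath (.const a)
  | tvar (a : Nat) : IsPath (.tvar a)
  | arrow (σ : TyC) {π : TyC} : IsPath π → IsPath (.arrow σ π)
  | ctor_omega (c : Nat) : IsPath (.ctor c .omega)
  | ctor (c : Nat) {π : TyC} : IsPath π → IsPath (.ctor c π)

/-- The set `ℙ(τ)` of paths in `τ` (as a list). -/
def pathsC : TyC → List TyC
  | .const a => [.const a]
  | .tvar a => [.tvar a]
  | .omega => []
  | .arrow σ τ => (pathsC τ).map (.arrow σ)
  | .inter σ τ => pathsC σ ++ pathsC τ
  | .ctor c τ =>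
      let ps := pathsC τ
      if ps.isEmpty then [.ctor c .omega] else ps.map (.ctor c)

/-- Auxiliary: the strong path relation. -/
def GoodC (π' π : TyC) : Prop :=
  SubC π' π ∧
  (∀ a, π = .const a → π' = .const a) ∧
  (∀ a, π = .tvar a → π' = .tvar a) ∧
  (∀ σ₂ τ₂, π = .arrow σ₂ τ₂ → ∃ σ₁ τ₁, π' = .arrow σ₁ τ₁ ∧ SubC σ₂ σ₁ ∧ SubC τ₁ τ₂) ∧
  (∀ c τ₁, π = .ctor c τ₁ → ∃ σ₁, π' = .ctor c σ₁ ∧ SubC σ₁ τ₁)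

lemma goodC_refl (π : TyC) : GoodC π π := by
  refine ⟨.refl _, ?_, ?_, ?_, ?_⟩ <;> intros <;> subst_vars
  · rfl
  · rfl
  · exact ⟨_, _, rfl, .refl _, .refl _⟩
  · exact ⟨_, rfl, .refl _⟩

lemma goodC_trans {a b c : TyC} (h1 : GoodC a b) (h2 : GoodC b c) : GoodC a c := by
  obtain ⟨l1, c1, v1, a1, t1⟩ := h1
  obtain ⟨l2, c2, v2, a2, t2⟩ := h2
  refine ⟨.trans l1 l2, ?_, ?_, ?_, ?_⟩
  · intro x h; exact c1 _ (c2 _ h)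
  · intro x h; exact v1 _ (v2 _ h)
  · intro σ₂ τ₂ h
    obtain ⟨s, t, hb, hs, ht⟩ := a2 _ _ h
    obtain ⟨s', t', ha, hs', ht'⟩ := a1 _ _ hb
    exact ⟨s', t', ha, .trans hs hs', .trans ht' ht⟩
  · intro d τ₁ h
    obtain ⟨s, hb, hs⟩ := t2 _ _ h
    obtain ⟨s', ha, hs'⟩ := t1 _ _ hb
    exact ⟨s', ha, .trans hs' hs⟩

lemma goodC_arrow {σ₁ σ₂ π₁ π₂ : TyC} (hs : SubC σ₂ σ₁) (hp : SubC π₁ π₂) :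
    GoodC (.arrow σ₁ π₁) (.arrow σ₂ π₂) := by
  refine ⟨.arrow_mono hs hp, by simp, by simp, ?_, by simp⟩
  rintro a b h
  injection h with h1 h2
  subst h1; subst h2
  exact ⟨σ₁, π₁, rfl, hs, hp⟩

lemma goodC_ctor {c : Nat} {σ₁ τ₁ : TyC} (h : SubC σ₁ τ₁) :
    GoodC (.ctor c σ₁) (.ctor c τ₁) := by
  refine ⟨.ctor_mono c h, by simp, by simp, by simp, ?_⟩
  rintro d t ht
  injection ht with h1 h2
  subst h1; subst h2
  exact ⟨σ₁, rfl, h⟩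

lemma interList_le_mem {L : List TyC} {π : TyC} (h : π ∈ L) : SubC (interListC L) π := by
  induction L with
  | nil => simp at h
  | cons a L ih =>
    cases L with
    | nil =>
      simp at h; subst h; exact .refl _
    | cons b M =>
      simp only [List.mem_cons] at h
      rcases h with rfl | h
      · exact .inter_left _ _
      · exact .trans (.inter_right _ _) (ih (by simpa using h))

lemma le_interList {σ : TyC} {L : List TyC} (h : ∀ π ∈ L, SubC σ π) :
    SubC σ (interListC L) := by
  induction L with
  | nil => exact .le_omega σ
  | cons a L ih =>
    cases L with
    | nil => exact h a (by simp)
    | cons b M =>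
      exact .le_inter (h a (by simp)) (ih (fun π hπ => h π (by simp [hπ])))

lemma interList_map_arrow (σ : TyC) {L : List TyC} (h : L ≠ []) :
    SubC (interListC (L.map (.arrow σ))) (.arrow σ (interListC L)) := by
  induction L with
  | nil => simp at h
  | cons a L ih =>
    cases L with
    | nil => exact .refl _
    | cons b M =>
      exact .trans
        (.le_inter (.inter_left _ _) (.trans (.inter_right _ _) (ih (by simp))))
        (.arrow_inter σ a (interListC (b :: M)))

lemma interList_map_ctor (c : Nat) {L : List TyC} (h : L ≠ []) :
    SubC (interListC (L.map (.ctor c))) (.ctor c (interListC L)) := by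
  induction L with
  | nil => simp at h
  | cons a L ih =>
    cases L with
    | nil => exact .refl _
    | cons b M =>
      exact .trans
        (.le_inter (.inter_left _ _) (.trans (.inter_right _ _) (ih (by simp))))
        (.ctor_inter c a (interListC (b :: M)))

lemma le_pathsC (τ : TyC) : SubC τ (interListC (pathsC τ)) := by
  have key : ∀ τ : TyC, ∀ π ∈ pathsC τ, SubC τ π := by
    intro τ
    induction τ with
    | const a => intro π h; simp [pathsC] at h; subst h; exact .refl _
    | tvar a => intro π h; simp [pathsC] at h; subst h; exact .refl _
    | omega => intro π h; simp [pathsC] at h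
    | arrow σ τ ihσ ihτ =>
      intro π h
      simp only [pathsC, List.mem_map] at h
      obtain ⟨π₀, h0, rfl⟩ := h
      exact .arrow_mono (.refl _) (ihτ _ h0)
    | inter σ τ ihσ ihτ =>
      intro π h
      simp only [pathsC, List.mem_append] at h
      rcases h with h | h
      · exact .trans (.inter_left _ _) (ihσ _ h)
      · exact .trans (.inter_right _ _) (ihτ _ h)
    | ctor c τ ih =>
      intro π h
      simp only [pathsC] at h
      by_cases he : (pathsC τ).isEmpty
      · simp [he] at h; subst h; exact .ctor_mono c (.le_omega _)
      · simp only [he, if_neg, Bool.false_eq_true, if_false, List.mem_map] at h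
        obtain ⟨π₀, h0, rfl⟩ := h
        exact .ctor_mono c (ih _ h0)
  exact le_interList (key τ)

lemma pathsC_le (τ : TyC) : SubC (interListC (pathsC τ)) τ := by
  induction τ with
  | const a => exact .refl _
  | tvar a => exact .refl _
  | omega => exact .refl _
  | arrow σ τ ihσ ihτ =>
    by_cases he : pathsC τ = []
    · have hωτ : SubC TyC.omega τ := by rw [he] at ihτ; exact ihτ
      have : SubC TyC.omega (.arrow σ τ) :=
        .trans .omega_arrow (.arrow_mono (.le_omega σ) hωτ)
      simpa [pathsC, he, interListC] using this
    · have h1 := interList_map_arrow σ he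
      have : SubC (interListC ((pathsC τ).map (.arrow σ))) (.arrow σ τ) :=
        .trans h1 (.arrow_mono (.refl _) ihτ)
      simpa [pathsC] using this
  | inter σ τ ihσ ihτ =>
    have hA : SubC (interListC (pathsC σ ++ pathsC τ)) (interListC (pathsC σ)) :=
      le_interList (fun π hπ => interList_le_mem (by simp [hπ]))
    have hB : SubC (interListC (pathsC σ ++ pathsC τ)) (interListC (pathsC τ)) :=
      le_interList (fun π hπ => interList_le_mem (by simp [hπ]))
    have : SubC (interListC (pathsC σ ++ pathsC τ)) (.inter σ τ) :=
      .le_inter (.trans hA ihσ) (.trans hB ihτ)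
    simpa [pathsC] using this
  | ctor c τ ih =>
    by_cases he : pathsC τ = []
    · have hωτ : SubC TyC.omega τ := by rw [he] at ih; exact ih
      have : SubC (TyC.ctor c .omega) (.ctor c τ) := .ctor_mono c hωτ
      simpa [pathsC, he, interListC] using this
    · have h1 := interList_map_ctor c he
      have : SubC (interListC ((pathsC τ).map (.ctor c))) (.ctor c τ) :=
        .trans h1 (.ctor_mono c ih)
      simpa [pathsC, he] using this

lemma fwdC {σ τ : TyC} (h : SubC σ τ) :
    ∀ π ∈ pathsC τ, ∃ π' ∈ pathsC σ, GoodC π' π := by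
  induction h with
  | refl σ => exact fun π h => ⟨π, h, goodC_refl π⟩
  | trans h1 h2 ih1 ih2 =>
    intro π h
    obtain ⟨π'', h'', g2⟩ := ih2 π h
    obtain ⟨π', h', g1⟩ := ih1 π'' h''
    exact ⟨π', h', goodC_trans g1 g2⟩
  | le_omega σ => intro π h; simp [pathsC] at h
  | omega_arrow => intro π h; simp [pathsC] at h
  | inter_left σ τ =>
    intro π h
    exact ⟨π, by simp [pathsC, h], goodC_refl π⟩
  | inter_right σ τ =>
    intro π h
    exact ⟨π, by simp [pathsC, h], goodC_refl π⟩
  | le_inter h1 h2 ih1 ih2 =>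
    intro π h
    simp only [pathsC, List.mem_append] at h
    rcases h with h | h
    · exact ih1 π h
    · exact ih2 π h
  | arrow_inter σ τ₁ τ₂ =>
    intro π h
    simp only [pathsC, List.mem_map, List.mem_append] at h
    obtain ⟨π₀, h0, rfl⟩ := h
    rcases h0 with h0 | h0
    · exact ⟨.arrow σ π₀,
        by simp only [pathsC, List.mem_append, List.mem_map]; exact Or.inl ⟨π₀, h0, rfl⟩,
        goodC_refl _⟩
    · exact ⟨.arrow σ π₀,
        by simp only [pathsC, List.mem_append, List.mem_map]; exact Or.inr ⟨π₀, h0, rfl⟩,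
        goodC_refl _⟩
  | arrow_mono hs ht ihs iht =>
    intro π h
    simp only [pathsC, List.mem_map] at h
    obtain ⟨π₀, h0, rfl⟩ := h
    obtain ⟨π₀', h0', g⟩ := iht π₀ h0
    exact ⟨.arrow _ π₀',
      by simp only [pathsC, List.mem_map]; exact ⟨π₀', h0', rfl⟩,
      goodC_arrow hs g.1⟩
  | @ctor_mono τ₁ τ₂ c ht ih =>
    intro π h
    simp only [pathsC] at h ⊢
    by_cases he2 : (pathsC τ₂).isEmpty
    · simp [he2] at h; subst h
      by_cases he1 : (pathsC τ₁).isEmpty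
      · exact ⟨.ctor c .omega, by simp [he1], goodC_refl _⟩
      · obtain ⟨π₀, hπ₀⟩ := List.exists_mem_of_ne_nil _ (by
          simpa [List.isEmpty_iff] using he1)
        exact ⟨.ctor c π₀,
          by simp only [he1, Bool.false_eq_true, if_false, List.mem_map]; exact ⟨π₀, hπ₀, rfl⟩,
          goodC_ctor (.le_omega π₀)⟩
    · simp only [he2, Bool.false_eq_true, if_false, List.mem_map] at h
      obtain ⟨π₀, h0, rfl⟩ := h
      obtain ⟨π₀', h0', g⟩ := ih π₀ h0
      have he1 : (pathsC τ₁).isEmpty = false := by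
        simp [List.isEmpty_iff]
        intro hc
        rw [hc] at h0'
        simp at h0'
      exact ⟨.ctor c π₀',
        by simp only [he1, Bool.false_eq_true, if_false, List.mem_map]; exact ⟨π₀', h0', rfl⟩,
        goodC_ctor g.1⟩
  | ctor_inter c τ₁ τ₂ =>
    intro π h
    simp only [pathsC] at h ⊢
    by_cases he : (pathsC τ₁ ++ pathsC τ₂).isEmpty
    · simp [he] at h; subst h
      have he1 : (pathsC τ₁).isEmpty = true := by
        simp only [List.isEmpty_iff, List.append_eq_nil_iff] at he ⊢; exact he.1
      exact ⟨.ctor c .omega, by simp [he1], goodC_refl _⟩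
    · simp only [he, Bool.false_eq_true, if_false, List.mem_map, List.mem_append] at h
      obtain ⟨π₀, h0, rfl⟩ := h
      rcases h0 with h0 | h0
      · have he1 : (pathsC τ₁).isEmpty = false := by
          simp only [List.isEmpty_eq_false_iff, ne_eq]
          intro hc; rw [hc] at h0; simp at h0
        refine ⟨.ctor c π₀, ?_, goodC_refl _⟩
        simp only [List.mem_append, he1, Bool.false_eq_true, if_false, List.mem_map]
        exact Or.inl ⟨π₀, h0, rfl⟩
      · have he2 : (pathsC τ₂).isEmpty = false := by
          simp only [List.isEmpty_eq_false_iff, ne_eq]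
          intro hc; rw [hc] at h0; simp at h0
        refine ⟨.ctor c π₀, ?_, goodC_refl _⟩
        simp only [List.mem_append, he2, Bool.false_eq_true, if_false, List.mem_map]
        exact Or.inr ⟨π₀, h0, rfl⟩

/-- Path characterization of subtyping in `𝕋_C`. -/
theorem path_subtyping (σ τ : TyC) :
    SubC σ τ ↔
      ∀ π ∈ pathsC τ, ∃ π' ∈ pathsC σ, SubC π' π ∧
        (∀ a, π = .const a → π' = .const a) ∧
        (∀ a, π = .tvar a → π' = .tvar a) ∧
        (∀ σ₂ τ₂, π = .arrow σ₂ τ₂ →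
          ∃ σ₁ τ₁, π' = .arrow σ₁ τ₁ ∧ SubC σ₂ σ₁ ∧ SubC τ₁ τ₂) ∧
        (∀ c τ₁, π = .ctor c τ₁ → ∃ σ₁, π' = .ctor c σ₁ ∧ SubC σ₁ τ₁) := by
  constructor
  · intro h π hπ
    obtain ⟨π', h', g⟩ := fwdC h π hπ
    exact ⟨π', h', g⟩
  · intro h
    refine SubC.trans (le_interList ?_) (pathsC_le τ)
    intro π hπ
    obtain ⟨π', hπ', hle, -⟩ := h π hπ
    exact .trans (.trans (le_pathsC σ) (interList_le_mem hπ')) hle
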